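/- (Wronski-type derivative formula for Pfaffians) Suppose Pfaffian entries f(i,j)(x) are smooth functions of x, skew-symmetric in i,j, satisfying d/dx f(i,j) = f(i+1,j) + f(i,j+1). Then for any indices i_1 < i_2 < ⋯ < i_{2N}, d/dx Pf(i_1,...,i_{2N}) = Σ_{k=1}^{2N} Pf(i_1,...,i_k + 1,...,i_{2N}). -/

import Mathlib

open Matrix

/-- Pfaffian of an `n × n` matrix, defined recursively by Laplace-type expansion
along the first row (it agrees with the signed sum over perfect matchings;
it is `0` for odd `n` and `1` for `n = 0`). -/
def pf {R : Type*} [CommRing R] : (n : ℕ) → Matrix (Fin n) (Fin n) R → R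
  | 0, _ => 1
  | 1, _ => 0
  | n + 2, M => ∑ j : Fin (n + 1), (-1 : R) ^ (j : ℕ) * M 0 j.succ *
      pf n ((M.submatrix Fin.succ Fin.succ).submatrix j.succAbove j.succAbove)


/-- Wronski-type derivative formula for Pfaffians: if the skew
entries satisfy `d/dx f(i,j) = f(i+1,j) + f(i,j+1)`, then for indices
`i₁ < i₂ < ⋯ < i_{2N}`,
`d/dx Pf(i₁,…,i_{2N}) = Σₖ Pf(i₁,…,iₖ+1,…,i_{2N})`. -/
lemma pf_of_expand (n : ℕ) (F : Fin (n+2) → Fin (n+2) → ℝ) :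
    pf (n+2) (Matrix.of F) = ∑ j : Fin (n + 1), (-1 : ℝ) ^ (j : ℕ) * F 0 j.succ *
      pf n (Matrix.of fun a b => F (j.succAbove a).succ (j.succAbove b).succ) := by
  rw [pf]; rfl

lemma update_comp_lem (n : ℕ) (j : Fin (n+1)) (m : Fin n) (g : Fin (n+2) → ℕ) (c : ℕ) :
    (fun a : Fin n => Function.update g ((j.succAbove m).succ) c ((j.succAbove a).succ))
      = Function.update (fun a => g ((j.succAbove a).succ)) m c :=
  Function.update_comp_eq_of_injective g
    ((Fin.succ_injective _).comp (Fin.succAbove_right_injective)) m c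

lemma update_comp_lem' (n : ℕ) (j : Fin (n+1)) (m : Fin n) (g : Fin (n+2) → ℕ) (c : ℕ)
    (a : Fin n) :
    Function.update g ((j.succAbove m).succ) c ((j.succAbove a).succ)
      = Function.update (fun a => g ((j.succAbove a).succ)) m c a :=
  congrFun (update_comp_lem n j m g c) a

lemma pf_deriv_aux (f : ℕ → ℕ → ℝ → ℝ)
    (hder : ∀ i j x, HasDerivAt (f i j) (f (i + 1) j x + f i (j + 1) x) x)
    (x : ℝ) :
    ∀ n (g : Fin n → ℕ),
      HasDerivAt (fun t => pf n (Matrix.of fun a b => f (g a) (g b) t))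
        (∑ k : Fin n, pf n (Matrix.of fun a b =>
          f (Function.update g k (g k + 1) a) (Function.update g k (g k + 1) b) x)) x := by
  intro n
  induction n using Nat.strong_induction_on with
  | _ n ih =>
    match n with
    | 0 =>
      intro g
      simp only [pf, Finset.univ_eq_empty, Finset.sum_empty]
      exact hasDerivAt_const x 1
    | 1 =>
      intro g
      simp only [pf, Finset.sum_const, smul_zero]
      exact hasDerivAt_const x 0
    | (n+2) =>
      intro g
      -- abbreviations
      have ihn := fun g' => ih n (by omega) g'
      -- rewrite function via expansion
      have hfun : (fun t => pf (n+2) (Matrix.of fun a b => f (g a) (g b) t))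
          = fun t => ∑ j : Fin (n+1), (-1:ℝ)^(j:ℕ) * f (g 0) (g j.succ) t *
              pf n (Matrix.of fun a b =>
                f (g (j.succAbove a).succ) (g (j.succAbove b).succ) t) := by
        funext t; rw [pf_of_expand]
      rw [hfun]
      -- the claimed derivative, rewritten
      have hS : (∑ k : Fin (n+2), pf (n+2) (Matrix.of fun a b =>
            f (Function.update g k (g k + 1) a) (Function.update g k (g k + 1) b) x))
          = ∑ j : Fin (n+1),
              (((-1:ℝ)^(j:ℕ) * (f (g 0 + 1) (g j.succ) x + f (g 0) (g j.succ + 1) x)) *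
                  pf n (Matrix.of fun a b =>
                    f (g (j.succAbove a).succ) (g (j.succAbove b).succ) x)
                + ((-1:ℝ)^(j:ℕ) * f (g 0) (g j.succ) x) *
                  (∑ m : Fin n, pf n (Matrix.of fun a b =>
                    f (Function.update (fun a => g (j.succAbove a).succ) m
                          (g (j.succAbove m).succ + 1) a)
                      (Function.update (fun a => g (j.succAbove a).succ) m
                          (g (j.succAbove m).succ + 1) b) x))) := by
        simp only [pf_of_expand]
        rw [Finset.sum_comm]
        refine Finset.sum_congr rfl fun j _ => ?_
        rw [Fin.sum_univ_succ, Fin.sum_univ_succAbove _ j]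
        have h0 : ∀ a : Fin (n+1), (a.succ : Fin (n+2)) ≠ 0 := fun a => Fin.succ_ne_zero a
        have h1 : ∀ a : Fin n, ((j.succAbove a).succ : Fin (n+2)) ≠ j.succ :=
          fun a => fun h => Fin.succAbove_ne j a (Fin.succ_injective _ h)
        have h2 : ∀ m a : Fin n, a ≠ m →
            ((j.succAbove a).succ : Fin (n+2)) ≠ (j.succAbove m).succ := by
          intro m a hma h
          exact hma (Fin.succAbove_right_injective (Fin.succ_injective _ h))
        have h1' : ∀ a : Fin n, (j.succ : Fin (n+2)) ≠ (j.succAbove a).succ :=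
          fun a => (h1 a).symm
        simp only [Function.update_self, Function.update_of_ne (h0 _),
          Function.update_of_ne (Fin.succ_ne_zero j),
          Function.update_of_ne (h1 _), Function.update_of_ne (h1' _),
          update_comp_lem',
          Function.update_of_ne (h0 _).symm]
        rw [Finset.mul_sum]
        ring
      rw [hS]
      refine HasDerivAt.fun_sum fun j _ => ?_
      exact (HasDerivAt.const_mul ((-1:ℝ)^(j:ℕ)) (hder (g 0) (g j.succ) x)).mul
        (ihn fun a => g (j.succAbove a).succ)


theorem pf_wronski_derivative (N : ℕ) (f : ℕ → ℕ → ℝ → ℝ)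
    (hskew : ∀ i j x, f i j x = - f j i x)
    (hder : ∀ i j x, HasDerivAt (f i j) (f (i + 1) j x + f i (j + 1) x) x)
    (idx : Fin (2 * N) → ℕ) (hmono : StrictMono idx) (x : ℝ) :
    HasDerivAt (fun t => pf (2 * N) (Matrix.of fun k l => f (idx k) (idx l) t))
      (∑ k : Fin (2 * N),
        pf (2 * N) (Matrix.of fun a b =>
          f (Function.update idx k (idx k + 1) a)
            (Function.update idx k (idx k + 1) b) x)) x := by
  exact pf_deriv_aux f hder x (2 * N) idx
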